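/- Define J(u) = ∫₀¹ (-log(u·v))/(u² - v²) dv for u > 1. Then: (i) there exist C > 0 and η₀ ∈ (0,1/2) such that for all u with 1 < u ≤ 1 + η₀, |J(u) - π²/8| ≤ C·(u-1)·|log(u-1)|; and (ii) there exist C' > 0 and U ≥ 2 such that for all u ≥ U, |J(u) - (1 - log u)/u²| ≤ C'·(1 + log u)/u⁴. -/

import Mathlib

open MeasureTheory Set

noncomputable section

namespace SOSEX

/-- `J(u) = ∫₀¹ (-log(u·v))/(u²-v²) dv`. -/
def Jfun (u : ℝ) : ℝ := ∫ v in Ioo (0 : ℝ) 1, (-Real.log (u * v)) / (u ^ 2 - v ^ 2)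

end SOSEX

open Filter Real Topology

lemma integrableOn_log01 : IntegrableOn Real.log (Ioo (0:ℝ) 1) := by
  have h2 : IntegrableOn (fun v : ℝ => 2 * v ^ (-(1:ℝ)/2)) (Ioo (0:ℝ) 1) := by
    have h := intervalIntegral.intervalIntegrable_rpow' (a := 0) (b := 1)
      (r := -(1:ℝ)/2) (by norm_num)
    rw [intervalIntegrable_iff_integrableOn_Ioo_of_le (by norm_num)] at h
    exact h.const_mul 2
  refine h2.mono' Real.measurable_log.aestronglyMeasurable ?_
  filter_upwards [ae_restrict_mem measurableSet_Ioo] with v hv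
  have hv0 : 0 < v := hv.1
  have hlog : Real.log v ≤ 0 := Real.log_nonpos hv0.le hv.2.le
  have hr : (0:ℝ) < v ^ (-(1:ℝ)/2) := Real.rpow_pos_of_pos hv0 _
  have key : -Real.log v ≤ 2 * v ^ (-(1:ℝ)/2) := by
    have h1 : Real.log (v ^ (-(1:ℝ)/2)) = (-(1:ℝ)/2) * Real.log v := Real.log_rpow hv0 _
    have h2 : Real.log (v ^ (-(1:ℝ)/2)) ≤ v ^ (-(1:ℝ)/2) - 1 :=
      Real.log_le_sub_one_of_pos hr
    nlinarith
  rw [Real.norm_eq_abs, abs_of_nonpos hlog]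
  linarith

lemma integral_neg_log_pow (n : ℕ) :
    ∫ v in Ioo (0:ℝ) 1, (-Real.log v) * v ^ n = 1 / ((n:ℝ)+1)^2 := by
  set c : ℝ := (n:ℝ) + 1 with hc'
  have hc : (0:ℝ) < c := by positivity
  set F : ℝ → ℝ := fun v => (v ^ (n+1) - c * (v ^ (n+1) * Real.log v)) / c ^ 2 with hF
  have hd : ∀ v ∈ Ioo (0:ℝ) 1, HasDerivAt F ((-Real.log v) * v ^ n) v := by
    intro v hv
    have hv0 : v ≠ 0 := ne_of_gt hv.1
    have h1 : HasDerivAt (fun w : ℝ => w ^ (n+1)) (c * v ^ n) v := by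
      have := hasDerivAt_pow (n+1) v
      simpa [hc', Nat.cast_add, Nat.cast_one, add_comm] using this
    have h2 : HasDerivAt (fun w : ℝ => w ^ (n+1) * Real.log w)
        (c * v ^ n * Real.log v + v ^ (n+1) * v⁻¹) v :=
      h1.mul (Real.hasDerivAt_log hv0)
    have h3 := ((h1.sub (h2.const_mul c)).div_const (c ^ 2))
    refine h3.congr_deriv ?_
    have hvne : v ≠ 0 := hv0
    field_simp
    ring
  have hT : Tendsto F (𝓝[>] (0:ℝ)) (𝓝 0) := by
    have t1 : Tendsto (fun v : ℝ => Real.log v * v ^ (c : ℝ)) (𝓝[>] (0:ℝ)) (𝓝 0) :=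
      tendsto_log_mul_rpow_nhdsGT_zero hc
    have t1' : Tendsto (fun v : ℝ => v ^ (n+1) * Real.log v) (𝓝[>] (0:ℝ)) (𝓝 0) := by
      refine t1.congr' ?_
      filter_upwards [self_mem_nhdsWithin] with v (hv : 0 < v)
      rw [hc', show ((n:ℝ)+1) = ((n+1 : ℕ) : ℝ) by push_cast; ring, Real.rpow_natCast]
      ring
    have t2 : Tendsto (fun v : ℝ => v ^ (n+1)) (𝓝[>] (0:ℝ)) (𝓝 0) := by
      have := (continuous_pow (n+1)).tendsto (0:ℝ)
      simpa [zero_pow (Nat.succ_ne_zero n)] using this.mono_left nhdsWithin_le_nhds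
    have h := ((t2.sub (t1'.const_mul c)).div_const (c ^ 2))
    simpa using h
  have hcont : ContinuousOn F (Icc 0 1) := by
    intro x hx
    rcases eq_or_ne x 0 with rfl | hx0
    · have hF0 : F 0 = 0 := by simp [hF]
      have : ContinuousWithinAt F (Ici (0:ℝ)) 0 := by
        rw [← continuousWithinAt_Ioi_iff_Ici]
        unfold ContinuousWithinAt
        rw [hF0]
        exact hT
      exact this.mono Icc_subset_Ici_self
    · refine ContinuousAt.continuousWithinAt ?_
      have : ContinuousAt Real.log x := Real.continuousAt_log hx0
      fun_prop
  have hInt : IntegrableOn (fun v => (-Real.log v) * v ^ n) (Ioo (0:ℝ) 1) := by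
    refine integrableOn_log01.neg.mono' ?_ ?_
    · exact (Real.measurable_log.neg.mul (measurable_id.pow_const n)).aestronglyMeasurable
    · filter_upwards [ae_restrict_mem measurableSet_Ioo] with v hv
      have hv0 : 0 < v := hv.1
      have hlog : Real.log v ≤ 0 := Real.log_nonpos hv0.le hv.2.le
      have hvp : 0 ≤ v ^ n := by positivity
      have hv1 : v ^ n ≤ 1 := pow_le_one₀ hv0.le hv.2.le
      rw [Real.norm_eq_abs, abs_of_nonneg (by nlinarith)]
      simp only [Pi.neg_apply]
      nlinarith
  have key := intervalIntegral.integral_eq_sub_of_hasDeriv_right_of_le (by norm_num : (0:ℝ) ≤ 1)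
      hcont (fun x hx => (hd x hx).hasDerivWithinAt)
      ((intervalIntegrable_iff_integrableOn_Ioo_of_le (by norm_num)).2 hInt)
  rw [intervalIntegral.integral_of_le (by norm_num), integral_Ioc_eq_integral_Ioo] at key
  rw [key]
  simp [hF]

lemma hasSum_odd_sq : HasSum (fun n : ℕ => (1:ℝ) / (2*(n:ℝ)+1)^2) (π^2/8) := by
  have hB : HasSum (fun n : ℕ => (1:ℝ) / (n:ℝ)^2) (π^2/6) := hasSum_zeta_two
  have hE : HasSum (fun k : ℕ => (1:ℝ) / ((2*k : ℕ):ℝ)^2) (π^2/6/4) := by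
    have h := hB.div_const 4
    refine h.congr_fun fun k => ?_
    rcases eq_or_ne k 0 with rfl | hk
    · norm_num
    · have : (k:ℝ) ≠ 0 := Nat.cast_ne_zero.2 hk
      push_cast
      field_simp
      ring
  have hOs : Summable (fun n : ℕ => (1:ℝ) / (2*(n:ℝ)+1)^2) := by
    have hs1 : Summable (fun n : ℕ => (1:ℝ) / ((n:ℝ)+1)^2) := by
      have := hB.summable
      rw [← summable_nat_add_iff 1] at this
      refine this.congr fun n => by push_cast; ring
    refine hs1.of_nonneg_of_le (fun n => by positivity) (fun n => ?_)
    have h1 : ((n:ℝ)+1)^2 ≤ (2*(n:ℝ)+1)^2 := by nlinarith [Nat.cast_nonneg (α := ℝ) n]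
    exact div_le_div_of_nonneg_left one_pos.le (by positivity) h1 |>.trans_eq rfl
  set O : ℝ := ∑' n : ℕ, (1:ℝ) / (2*(n:ℝ)+1)^2 with hO'
  have hO : HasSum (fun n : ℕ => (1:ℝ) / (2*(n:ℝ)+1)^2) O := hOs.hasSum
  have hO2 : HasSum (fun k : ℕ => (1:ℝ) / ((2*k+1 : ℕ):ℝ)^2) O := by
    refine hO.congr_fun fun k => by push_cast; ring
  have htot : HasSum (fun n : ℕ => (1:ℝ)/(n:ℝ)^2) (π^2/6/4 + O) := HasSum.even_add_odd hE hO2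
  have := htot.unique hB
  have hfin : O = π^2/8 := by linarith
  exact hfin ▸ hO

lemma integrableOn_neg_log_pow (n : ℕ) :
    IntegrableOn (fun v => (-Real.log v) * v ^ n) (Ioo (0:ℝ) 1) := by
  refine integrableOn_log01.neg.mono' ?_ ?_
  · exact (Real.measurable_log.neg.mul (measurable_id.pow_const n)).aestronglyMeasurable
  · filter_upwards [ae_restrict_mem measurableSet_Ioo] with v hv
    have hv0 : 0 < v := hv.1
    have hlog : Real.log v ≤ 0 := Real.log_nonpos hv0.le hv.2.le
    have hvp : 0 ≤ v ^ n := by positivity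
    have hv1 : v ^ n ≤ 1 := pow_le_one₀ hv0.le hv.2.le
    rw [Real.norm_eq_abs, abs_of_nonneg (by nlinarith)]
    simp only [Pi.neg_apply]
    nlinarith

lemma integral_pi2_8 :
    ∫ v in Ioo (0:ℝ) 1, (-Real.log v) / (1 - v^2) = π^2/8 := by
  have hFint : ∀ n : ℕ, Integrable (fun v => (-Real.log v) * v ^ (2*n))
      (volume.restrict (Ioo (0:ℝ) 1)) := fun n => integrableOn_neg_log_pow (2*n)
  have hnorm : ∀ n : ℕ, (∫ v in Ioo (0:ℝ) 1, ‖(-Real.log v) * v ^ (2*n)‖)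
      = 1 / (2*(n:ℝ)+1)^2 := by
    intro n
    have h1 : ∫ v in Ioo (0:ℝ) 1, ‖(-Real.log v) * v ^ (2*n)‖
        = ∫ v in Ioo (0:ℝ) 1, (-Real.log v) * v ^ (2*n) := by
      refine setIntegral_congr_fun measurableSet_Ioo fun v hv => ?_
      have hlog : Real.log v ≤ 0 := Real.log_nonpos hv.1.le hv.2.le
      have hvp : (0:ℝ) ≤ v ^ (2*n) := pow_nonneg hv.1.le _
      rw [Real.norm_eq_abs, abs_of_nonneg (by nlinarith)]
    rw [h1, integral_neg_log_pow (2*n)]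
    push_cast
    ring_nf
  have hsum : Summable (fun n : ℕ => ∫ v in Ioo (0:ℝ) 1, ‖(-Real.log v) * v ^ (2*n)‖) := by
    refine (hasSum_odd_sq.summable).congr fun n => (hnorm n).symm
  have key := MeasureTheory.integral_tsum_of_summable_integral_norm hFint hsum
  have h2 : ∫ v in Ioo (0:ℝ) 1, (∑' n : ℕ, (-Real.log v) * v ^ (2*n))
      = ∫ v in Ioo (0:ℝ) 1, (-Real.log v) / (1 - v^2) := by
    refine setIntegral_congr_fun measurableSet_Ioo fun v hv => ?_
    have hv2 : v^2 < 1 := by nlinarith [hv.1, hv.2]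
    have hv2' : (0:ℝ) ≤ v^2 := sq_nonneg v
    have hg : ∑' n : ℕ, (v^2)^n = (1 - v^2)⁻¹ := tsum_geometric_of_lt_one hv2' hv2
    calc ∑' n : ℕ, (-Real.log v) * v ^ (2*n)
        = ∑' n : ℕ, (-Real.log v) * (v^2) ^ n := by
          congr 1; funext n; rw [pow_mul]
      _ = (-Real.log v) * ∑' n : ℕ, (v^2)^n := tsum_mul_left
      _ = (-Real.log v) / (1 - v^2) := by rw [hg]; ring
  have h3 : (∑' n : ℕ, ∫ v in Ioo (0:ℝ) 1, (-Real.log v) * v ^ (2*n)) = π^2/8 := by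
    have : ∀ n : ℕ, (∫ v in Ioo (0:ℝ) 1, (-Real.log v) * v ^ (2*n)) = 1/(2*(n:ℝ)+1)^2 := by
      intro n
      rw [integral_neg_log_pow (2*n)]
      push_cast; ring_nf
    rw [tsum_congr this]
    exact hasSum_odd_sq.tsum_eq
  rw [← h2, ← key, h3]

lemma integral_neg_log_one : ∫ v in Ioo (0:ℝ) 1, (-Real.log v) = 1 := by
  have := integral_neg_log_pow 0
  simpa using this

lemma integrableOn_neg_log : IntegrableOn (fun v => -Real.log v) (Ioo (0:ℝ) 1) :=
  integrableOn_log01.neg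

lemma integral_inv_sub {u : ℝ} (hu : 1 < u) :
    ∫ v in Ioo (0:ℝ) 1, (u - v)⁻¹ = Real.log u - Real.log (u-1) := by
  have hne : ∀ x ∈ Icc (0:ℝ) 1, u - x ≠ 0 := fun x hx => by
    have := hx.2; intro h; nlinarith
  have hcont : ContinuousOn (fun v : ℝ => (u - v)⁻¹) (Icc 0 1) :=
    (continuousOn_const.sub continuousOn_id).inv₀ hne
  have hderiv : ∀ x ∈ uIcc (0:ℝ) 1,
      HasDerivAt (fun v : ℝ => -Real.log (u - v)) ((u - x)⁻¹) x := by
    intro x hx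
    rw [uIcc_of_le (by norm_num : (0:ℝ) ≤ 1)] at hx
    have h1 : HasDerivAt (fun v : ℝ => u - v) (-1) x := by
      simpa using (hasDerivAt_id x).const_sub u
    have h2 := (Real.hasDerivAt_log (hne x hx)).comp x h1
    have h3 := h2.neg
    refine h3.congr_deriv ?_
    field_simp
  have hint : IntervalIntegrable (fun v : ℝ => (u - v)⁻¹) volume 0 1 := by
    refine ContinuousOn.intervalIntegrable ?_
    rwa [uIcc_of_le (by norm_num : (0:ℝ) ≤ 1)]
  have key := intervalIntegral.integral_eq_sub_of_hasDerivAt hderiv hint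
  rw [intervalIntegral.integral_of_le (by norm_num), integral_Ioc_eq_integral_Ioo] at key
  rw [key]
  simp
  ring

lemma neg_log_le_two_sub {v : ℝ} (hv0 : 0 < v) (hv2 : 1/2 ≤ v) (hv1 : v ≤ 1) :
    -Real.log v ≤ 2 * (1 - v) := by
  have h1 : Real.log (1/v) ≤ 1/v - 1 := Real.log_le_sub_one_of_pos (by positivity)
  rw [one_div, Real.log_inv] at h1
  have h2 : -Real.log v * v ≤ (v⁻¹ - 1) * v := by
    apply mul_le_mul_of_nonneg_right h1 hv0.le
  rw [sub_mul, inv_mul_cancel₀ hv0.ne'] at h2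
  nlinarith [Real.log_nonpos (by linarith) hv1]

lemma integrableOn_q :
    IntegrableOn (fun v : ℝ => (-Real.log v) / (1 - v^2)) (Ioo (0:ℝ) 1) := by
  have hg : IntegrableOn (fun v : ℝ => (4/3) * (-Real.log v) + 2) (Ioo (0:ℝ) 1) :=
    (integrableOn_neg_log.const_mul (4/3)).add (integrableOn_const
      (measure_Ioo_lt_top.ne))
  refine hg.mono' ?_ ?_
  · exact (Real.measurable_log.neg.div
      (measurable_const.sub (measurable_id.pow_const 2))).aestronglyMeasurable
  · filter_upwards [ae_restrict_mem measurableSet_Ioo] with v hv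
    have hv0 : 0 < v := hv.1
    have hv1 : v < 1 := hv.2
    have hw : 0 ≤ -Real.log v := by
      have := Real.log_nonpos hv0.le hv1.le; linarith
    have hd2 : 0 < 1 - v^2 := by nlinarith
    rw [Real.norm_eq_abs, abs_of_nonneg (by positivity)]
    rcases le_or_gt v (1/2) with hhalf | hhalf
    · have hd2' : (3/4 : ℝ) ≤ 1 - v^2 := by nlinarith
      have : (-Real.log v) / (1 - v^2) ≤ (4/3) * (-Real.log v) := by
        rw [div_le_iff₀ hd2]
        nlinarith
      linarith
    · have hw2 : -Real.log v ≤ 2 * (1 - v) := neg_log_le_two_sub hv0 hhalf.le hv1.le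
      have : (-Real.log v) / (1 - v^2) ≤ 2 := by
        rw [div_le_iff₀ hd2]
        nlinarith
      nlinarith

lemma integrableOn_fu {u : ℝ} (hu : 1 < u) :
    IntegrableOn (fun v : ℝ => (-Real.log (u*v)) / (u^2 - v^2)) (Ioo (0:ℝ) 1) := by
  have hu0 : 0 < u := by linarith
  have hg : IntegrableOn (fun v : ℝ => (Real.log u + (-Real.log v)) * (u^2-1)⁻¹)
      (Ioo (0:ℝ) 1) :=
    ((integrableOn_const measure_Ioo_lt_top.ne).add integrableOn_neg_log).mul_const _
  refine hg.mono' ?_ ?_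
  · exact ((Real.measurable_log.comp (measurable_const.mul measurable_id)).neg.div
      (measurable_const.sub (measurable_id.pow_const 2))).aestronglyMeasurable
  · filter_upwards [ae_restrict_mem measurableSet_Ioo] with v hv
    have hv0 : 0 < v := hv.1
    have hv1 : v < 1 := hv.2
    have hd1 : 0 < u^2 - v^2 := by nlinarith
    have hd1' : u^2 - 1 ≤ u^2 - v^2 := by nlinarith
    have hlm : Real.log (u*v) = Real.log u + Real.log v := Real.log_mul hu0.ne' hv0.ne'
    have hnum : |(-Real.log (u*v))| ≤ Real.log u + (-Real.log v) := by
      rw [hlm, abs_neg]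
      calc |Real.log u + Real.log v| ≤ |Real.log u| + |Real.log v| := abs_add_le _ _
        _ = Real.log u + (-Real.log v) := by
            rw [abs_of_nonneg (Real.log_nonneg hu.le),
              abs_of_nonpos (Real.log_nonpos hv0.le hv1.le)]
    have hrhs : 0 ≤ Real.log u + (-Real.log v) := by
      have := Real.log_nonneg hu.le
      have := Real.log_nonpos hv0.le hv1.le
      linarith
    have hu21 : 0 < u^2 - 1 := by nlinarith
    rw [Real.norm_eq_abs, abs_div, abs_of_pos hd1, ← div_eq_mul_inv]
    exact div_le_div₀ hrhs hnum hu21 hd1'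

lemma integrable_pieces {u : ℝ} (hu : 1 < u) :
    IntegrableOn (fun v : ℝ => (u - v)⁻¹) (Ioo (0:ℝ) 1) := by
  have hne : ∀ x ∈ Icc (0:ℝ) 1, u - x ≠ 0 := fun x hx => by
    have := hx.2; intro h; nlinarith
  have hcont : ContinuousOn (fun v : ℝ => (u - v)⁻¹) (Icc 0 1) :=
    (continuousOn_const.sub continuousOn_id).inv₀ hne
  exact (hcont.integrableOn_Icc).mono_set Ioo_subset_Icc_self

lemma integral_const_add_neg_log (a : ℝ) :
    ∫ v in Ioo (0:ℝ) 1, (a + (-Real.log v)) = a + 1 := by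
  have hca : IntegrableOn (fun _ : ℝ => a) (Ioo (0:ℝ) 1) := integrableOn_const measure_Ioo_lt_top.ne
  rw [integral_add hca integrableOn_neg_log,
    integral_neg_log_one, setIntegral_const]
  simp [Real.volume_Ioo]

lemma partII {u : ℝ} (hu : 2 ≤ u) :
    |(∫ v in Ioo (0:ℝ) 1, (-Real.log (u * v)) / (u ^ 2 - v ^ 2)) - (1 - Real.log u) / u ^ 2|
      ≤ 2 * (1 + Real.log u) / u ^ 4 := by
  have hu1 : (1:ℝ) < u := by linarith
  have hu0 : (0:ℝ) < u := by linarith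
  have hu21 : (0:ℝ) < u^2 - 1 := by nlinarith
  set f : ℝ → ℝ := fun v => (-Real.log (u*v)) / (u^2 - v^2) with hf
  set m : ℝ → ℝ := fun v => (-Real.log u + (-Real.log v)) / u^2 with hm
  have hfint : IntegrableOn f (Ioo (0:ℝ) 1) := integrableOn_fu hu1
  have hmint : IntegrableOn m (Ioo (0:ℝ) 1) :=
    ((integrableOn_const measure_Ioo_lt_top.ne).add integrableOn_neg_log).div_const _
  have hmval : ∫ v in Ioo (0:ℝ) 1, m v = (1 - Real.log u) / u^2 := by
    rw [hm]
    rw [integral_div, integral_const_add_neg_log]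
    ring
  set c : ℝ := (u^2 * (u^2 - 1))⁻¹ with hc
  have hbint : IntegrableOn (fun v : ℝ => (Real.log u + (-Real.log v)) * c) (Ioo (0:ℝ) 1) :=
    ((integrableOn_const measure_Ioo_lt_top.ne).add integrableOn_neg_log).mul_const _
  have hptwise : ∀ v ∈ Ioo (0:ℝ) 1, ‖f v - m v‖ ≤ (Real.log u + (-Real.log v)) * c := by
    intro v hv
    have hv0 : 0 < v := hv.1
    have hv1 : v < 1 := hv.2
    have hd1 : 0 < u^2 - v^2 := by nlinarith
    have hdd : 0 < u^2 * (u^2 - 1) := by positivity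
    have hlm : Real.log (u*v) = Real.log u + Real.log v := Real.log_mul hu0.ne' hv0.ne'
    have hid : f v - m v = (-Real.log u - Real.log v) * (v^2 / ((u^2 - v^2) * u^2)) := by
      rw [hf, hm]
      simp only [hlm]
      field_simp
      ring
    rw [hid, Real.norm_eq_abs, abs_mul]
    have h1 : |(-Real.log u - Real.log v)| ≤ Real.log u + (-Real.log v) := by
      have hs : 0 ≤ Real.log u := Real.log_nonneg hu1.le
      have hw : Real.log v ≤ 0 := Real.log_nonpos hv0.le hv1.le
      rw [sub_eq_add_neg]
      calc |(-Real.log u) + -Real.log v| ≤ |(-Real.log u)| + |(-Real.log v)| := abs_add_le _ _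
        _ = Real.log u + (-Real.log v) := by
            rw [abs_neg, abs_of_nonneg hs, abs_of_nonneg (by linarith)]
    have h2 : |v^2 / ((u^2 - v^2) * u^2)| ≤ c := by
      rw [abs_of_nonneg (by positivity), hc, ← one_div]
      have hv2 : v^2 ≤ 1 := by nlinarith
      refine div_le_div₀ zero_le_one hv2 hdd ?_
      nlinarith [mul_nonneg (sq_nonneg u) (by nlinarith : (0:ℝ) ≤ 1 - v^2)]
    have hrn : 0 ≤ Real.log u + (-Real.log v) := by
      have hs : 0 ≤ Real.log u := Real.log_nonneg hu1.le
      have hw : Real.log v ≤ 0 := Real.log_nonpos hv0.le hv1.le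
      linarith
    exact mul_le_mul h1 h2 (abs_nonneg _) hrn
  have key : |(∫ v in Ioo (0:ℝ) 1, f v) - ∫ v in Ioo (0:ℝ) 1, m v|
      ≤ (Real.log u + 1) * c := by
    rw [← integral_sub hfint hmint]
    calc |∫ v in Ioo (0:ℝ) 1, (f v - m v)| ≤ ∫ v in Ioo (0:ℝ) 1, ‖f v - m v‖ := by
          simpa [Real.norm_eq_abs] using
            norm_integral_le_integral_norm (μ := volume.restrict (Ioo (0:ℝ) 1))
              (f := fun v => f v - m v)
      _ ≤ ∫ v in Ioo (0:ℝ) 1, (Real.log u + (-Real.log v)) * c :=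
          setIntegral_mono_on ((hfint.sub hmint).norm) hbint measurableSet_Ioo hptwise
      _ = (Real.log u + 1) * c := by
          rw [integral_mul_const, integral_const_add_neg_log]
  have hc2 : c ≤ 2 / u^4 := by
    rw [hc, inv_eq_one_div, div_le_div_iff₀ (by nlinarith) (by positivity)]
    nlinarith [sq_nonneg u, sq_nonneg (u^2), mul_le_mul_of_nonneg_left (by nlinarith : (2:ℝ) ≤ u^2) (sq_nonneg u)]
  have hlogu : 0 ≤ Real.log u := Real.log_nonneg hu1.le
  calc |(∫ v in Ioo (0:ℝ) 1, (-Real.log (u * v)) / (u ^ 2 - v ^ 2)) - (1 - Real.log u) / u ^ 2|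
      = |(∫ v in Ioo (0:ℝ) 1, f v) - ∫ v in Ioo (0:ℝ) 1, m v| := by rw [hmval]
    _ ≤ (Real.log u + 1) * c := key
    _ ≤ (Real.log u + 1) * (2 / u^4) :=
        mul_le_mul_of_nonneg_left hc2 (by linarith)
    _ = 2 * (1 + Real.log u) / u^4 := by ring

set_option maxHeartbeats 1000000 in
lemma partI {u : ℝ} (hu1 : 1 < u) (hu2 : u ≤ 5/4) :
    |(∫ v in Ioo (0:ℝ) 1, (-Real.log (u * v)) / (u ^ 2 - v ^ 2)) - π^2/8|
      ≤ 11 * (u - 1) * |Real.log (u - 1)| := by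
  have hu0 : (0:ℝ) < u := by linarith
  have hε0 : (0:ℝ) < u - 1 := by linarith
  have hε4 : u - 1 ≤ 1/4 := by linarith
  set L : ℝ := -Real.log (u - 1) with hL
  have hlogneg : Real.log (u - 1) < 0 := Real.log_neg hε0 (by linarith)
  have habs : |Real.log (u - 1)| = L := by rw [abs_of_neg hlogneg]
  have hL1 : 1 ≤ L := by
    have h4 : Real.log (u - 1) ≤ Real.log (1/4) := Real.log_le_log hε0 hε4
    have hexp : Real.exp 1 ≤ 4 := by
      have := Real.exp_one_lt_d9; linarith
    have h1 : (1:ℝ) ≤ Real.log 4 := (Real.le_log_iff_exp_le (by norm_num)).2 hexp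
    have : Real.log (1/4) = -Real.log 4 := by
      rw [one_div, Real.log_inv]
    rw [this] at h4
    simp only [hL]
    linarith
  have hs0 : 0 ≤ Real.log u := Real.log_nonneg hu1.le
  have hsε : Real.log u ≤ u - 1 := by
    have := Real.log_le_sub_one_of_pos hu0; linarith
  set D : ℝ := Real.log u - Real.log (u - 1) with hD
  have hDval : D = Real.log u + L := by rw [hD, hL]; ring
  set f : ℝ → ℝ := fun v => (-Real.log (u*v)) / (u^2 - v^2) with hf
  set q : ℝ → ℝ := fun v => (-Real.log v) / (1 - v^2) with hq
  have hfint : IntegrableOn f (Ioo (0:ℝ) 1) := integrableOn_fu hu1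
  have hqint : IntegrableOn q (Ioo (0:ℝ) 1) := integrableOn_q
  have hinv : IntegrableOn (fun v : ℝ => (u - v)⁻¹) (Ioo (0:ℝ) 1) := integrable_pieces hu1
  set B : ℝ → ℝ := fun v => (u-1) * (u-v)⁻¹
      + (u^2-1) * ((16/9) * (-Real.log v) + 2 * (u-v)⁻¹) with hB
  have hB2int : IntegrableOn
      (fun v : ℝ => ((16/9) * (-Real.log v) + 2 * (u-v)⁻¹)) (Ioo (0:ℝ) 1) :=
    (integrableOn_neg_log.const_mul _).add (hinv.const_mul _)
  have hBint : IntegrableOn B (Ioo (0:ℝ) 1) :=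
    (hinv.const_mul _).add (hB2int.const_mul _)
  have hptwise : ∀ v ∈ Ioo (0:ℝ) 1, ‖f v - q v‖ ≤ B v := by
    intro v hv
    have hv0 : 0 < v := hv.1
    have hv1 : v < 1 := hv.2
    have hd1 : 0 < u^2 - v^2 := by nlinarith
    have hd2 : 0 < 1 - v^2 := by nlinarith
    have huv : 0 < u - v := by linarith
    have hw : 0 ≤ -Real.log v := by
      have := Real.log_nonpos hv0.le hv1.le; linarith
    have hu21 : 0 < u^2 - 1 := by nlinarith
    have hlm : Real.log (u*v) = Real.log u + Real.log v := Real.log_mul hu0.ne' hv0.ne'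
    have hid : f v - q v = -(Real.log u / (u^2-v^2)
        + (-Real.log v) * ((u^2-1) / ((u^2-v^2) * (1-v^2)))) := by
      rw [hf, hq]
      simp only [hlm]
      field_simp
      ring
    rw [hid, Real.norm_eq_abs, abs_neg, abs_of_nonneg (add_nonneg
      (div_nonneg hs0 hd1.le)
      (mul_nonneg hw (div_nonneg hu21.le (mul_pos hd1 hd2).le)))]
    have term1 : Real.log u / (u^2-v^2) ≤ (u-1) * (u-v)⁻¹ := by
      rw [← div_eq_mul_inv]
      refine div_le_div₀ hε0.le hsε huv ?_
      nlinarith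
    have term2 : (-Real.log v) * ((u^2-1) / ((u^2-v^2) * (1-v^2)))
        ≤ (u^2-1) * ((16/9) * (-Real.log v) + 2 * (u-v)⁻¹) := by
      have hrw : (-Real.log v) * ((u^2-1) / ((u^2-v^2) * (1-v^2)))
          = (u^2-1) * ((-Real.log v) / ((u^2-v^2) * (1-v^2))) := by ring
      rw [hrw]
      refine mul_le_mul_of_nonneg_left ?_ hu21.le
      have hinv0 : 0 ≤ (u-v)⁻¹ := inv_nonneg.2 huv.le
      rcases le_or_gt v (1/2) with hhalf | hhalf
      · have hd1' : (3/4 : ℝ) ≤ u^2 - v^2 := by nlinarith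
        have hd2' : (3/4 : ℝ) ≤ 1 - v^2 := by nlinarith
        have : (-Real.log v) / ((u^2-v^2) * (1-v^2)) ≤ (16/9) * (-Real.log v) := by
          rw [div_le_iff₀ (mul_pos hd1 hd2)]
          nlinarith [mul_le_mul hd1' hd2' (by norm_num) (by linarith : (0:ℝ) ≤ u^2 - v^2)]
        linarith
      · have hw2 : -Real.log v ≤ 2 * (1 - v) := neg_log_le_two_sub hv0 hhalf.le hv1.le
        have hge1 : u - v ≤ u^2 - v^2 := by nlinarith
        have hge2 : 1 - v ≤ 1 - v^2 := by nlinarith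
        have : (-Real.log v) / ((u^2-v^2) * (1-v^2)) ≤ 2 * (u-v)⁻¹ := by
          rw [← div_eq_mul_inv 2, div_le_div_iff₀ (mul_pos hd1 hd2) huv]
          have hmm : (u-v) * (1-v) ≤ (u^2-v^2) * (1-v^2) :=
            mul_le_mul hge1 hge2 (by linarith) hd1.le
          nlinarith [mul_le_mul_of_nonneg_right hw2 huv.le]
        nlinarith [mul_nonneg (by norm_num : (0:ℝ) ≤ 16/9) hw]
    calc Real.log u / (u^2-v^2) + (-Real.log v) * ((u^2-1) / ((u^2-v^2) * (1-v^2)))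
        ≤ (u-1) * (u-v)⁻¹ + (u^2-1) * ((16/9) * (-Real.log v) + 2 * (u-v)⁻¹) :=
          add_le_add term1 term2
      _ = B v := by rw [hB]
  have hBval : ∫ v in Ioo (0:ℝ) 1, B v = (u-1)*D + (u^2-1)*(16/9 + 2*D) := by
    rw [hB]
    rw [integral_add (hinv.const_mul _) (hB2int.const_mul _)]
    rw [integral_const_mul, integral_const_mul, integral_inv_sub hu1]
    rw [integral_add (integrableOn_neg_log.const_mul _) (hinv.const_mul _)]
    rw [integral_const_mul, integral_const_mul, integral_neg_log_one, integral_inv_sub hu1]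
    rw [hD]
    ring
  have key : |(∫ v in Ioo (0:ℝ) 1, f v) - π^2/8| ≤ (u-1)*D + (u^2-1)*(16/9 + 2*D) := by
    rw [← integral_pi2_8, show (∫ v in Ioo (0:ℝ) 1, (-Real.log v)/(1-v^2))
      = ∫ v in Ioo (0:ℝ) 1, q v from rfl, ← integral_sub hfint hqint]
    calc |∫ v in Ioo (0:ℝ) 1, (f v - q v)| ≤ ∫ v in Ioo (0:ℝ) 1, ‖f v - q v‖ := by
          simpa [Real.norm_eq_abs] using
            norm_integral_le_integral_norm (μ := volume.restrict (Ioo (0:ℝ) 1))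
              (f := fun v => f v - q v)
      _ ≤ ∫ v in Ioo (0:ℝ) 1, B v :=
          setIntegral_mono_on ((hfint.sub hqint).norm) hBint measurableSet_Ioo hptwise
      _ = (u-1)*D + (u^2-1)*(16/9 + 2*D) := hBval
  rw [habs]
  refine key.trans ?_
  have hu9 : u + 1 ≤ 9/4 := by linarith
  have hDle : D ≤ 1/4 + L := by rw [hDval]; linarith
  have hD0 : 0 ≤ D := by rw [hDval]; linarith
  nlinarith [mul_le_mul_of_nonneg_left hDle hε0.le, mul_le_mul_of_nonneg_left hDle (by nlinarith : (0:ℝ) ≤ u^2-1),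
    mul_le_mul_of_nonneg_right hε4 (by linarith : (0:ℝ) ≤ L),
    mul_pos hε0 (by linarith : (0:ℝ) < L),
    mul_le_mul_of_nonneg_right (by nlinarith : u^2 - 1 ≤ (9/4)*(u-1)) (by linarith : (0:ℝ) ≤ 16/9 + 2*D),
    mul_le_mul_of_nonneg_left hL1 hε0.le]


/-- Endpoint asymptotics of `J(u)`:
`J(u) = π²/8 + O((u-1)|log(u-1)|)` as `u → 1⁺` and
`J(u) = (1-log u)/u² + O((1+log u)/u⁴)` as `u → ∞`. -/
theorem stmt16 :
    (∃ C : ℝ, 0 < C ∧ ∃ η₀ : ℝ, 0 < η₀ ∧ η₀ < 1 / 2 ∧ ∀ u : ℝ, 1 < u → u ≤ 1 + η₀ →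
      |SOSEX.Jfun u - Real.pi ^ 2 / 8| ≤ C * (u - 1) * |Real.log (u - 1)|) ∧
    (∃ C' : ℝ, 0 < C' ∧ ∃ U : ℝ, 2 ≤ U ∧ ∀ u : ℝ, U ≤ u →
      |SOSEX.Jfun u - (1 - Real.log u) / u ^ 2| ≤ C' * (1 + Real.log u) / u ^ 4) := by
  constructor
  · refine ⟨11, by norm_num, 1/4, by norm_num, by norm_num, fun u hu1 hu2 => ?_⟩
    have := partI hu1 (by linarith)
    simpa [SOSEX.Jfun, mul_assoc] using this
  · refine ⟨2, by norm_num, 2, le_refl 2, fun u hu => ?_⟩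
    have := partII hu
    simpa [SOSEX.Jfun, mul_div_assoc] using this
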